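/- Let R be a principal ideal domain and M a finitely generated R-module whose torsion submodule M_tor is nonzero. Then there exists a maximal ideal m ⊆ R with dim_{R/m}(M/mM) > rank(M), where rank(M) = dim_{Frac(R)}(Frac(R) ⊗_R M). -/

import Mathlib

open TensorProduct

/-- `A`-linear version of `TensorProduct.prodRight`. -/
noncomputable def prodRightAlg (R A M N : Type*) [CommRing R] [CommRing A] [Algebra R A]
    [AddCommGroup M] [Module R M] [AddCommGroup N] [Module R N] :
    A ⊗[R] (M × N) ≃ₗ[A] (A ⊗[R] M) × (A ⊗[R] N) := by
  refine LinearEquiv.ofBijective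
    (((LinearMap.fst R M N).baseChange A).prod ((LinearMap.snd R M N).baseChange A)) ?_
  have h : ⇑(((LinearMap.fst R M N).baseChange A).prod ((LinearMap.snd R M N).baseChange A))
      = ⇑(TensorProduct.prodRight R A A M N) := by
    funext z
    induction z using TensorProduct.induction_on with
    | zero => simp
    | tmul a mn => obtain ⟨m, n⟩ := mn; simp
    | add x y hx hy => rw [map_add, map_add, hx, hy]
  rw [Function.Bijective, h]
  exact (TensorProduct.prodRight R A A M N).bijective

set_option maxHeartbeats 1000000 in
/-- Let `R` be a PID and `M` a finitely generated `R`-module whose torsion submodule is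
nonzero.  Then there is a maximal ideal `m ⊆ R` with
`dim_{R/m} (M/mM) > rank M`, where `M/mM = (R/m) ⊗[R] M` and
`rank M = dim_{Frac R} (Frac R ⊗[R] M)`. -/
theorem stmt_4 (R : Type*) [CommRing R] [IsDomain R] [IsPrincipalIdealRing R]
    (M : Type*) [AddCommGroup M] [Module R M] [Module.Finite R M]
    (htor : Submodule.torsion R M ≠ ⊥) :
    ∃ m : Ideal R, m.IsMaximal ∧
      Module.finrank (R ⧸ m) ((R ⧸ m) ⊗[R] M) >
        Module.finrank (FractionRing R) (FractionRing R ⊗[R] M) := by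
  classical
  set N := Submodule.torsion R M with hNdef
  haveI : Module.Finite R N := Module.Finite.iff_fg.mpr (IsNoetherian.noetherian N)
  haveI : Module.Finite R (M ⧸ N) := Module.Finite.of_surjective _ N.mkQ_surjective
  haveI : Module.Free R (M ⧸ N) := Module.free_of_finite_type_torsion_free'
  -- splitting: M ≃ N × (M ⧸ N)
  obtain ⟨f, hf⟩ := Module.projective_lifting_property N.mkQ LinearMap.id N.mkQ_surjective
  have e : (↥N × (M ⧸ N)) ≃ₗ[R] M :=
    lequivProdOfRightSplitExact N.injective_subtype
      (by rw [Submodule.range_subtype, Submodule.ker_mkQ]) hf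
  -- N is nontrivial
  haveI hNnt : Nontrivial N := Submodule.nontrivial_iff_ne_bot.mpr htor
  -- choose maximal ideal containing the annihilator of N
  have hann : Module.annihilator R N ≠ ⊤ := by
    intro h
    obtain ⟨n, hn⟩ := exists_ne (0 : N)
    have : (1 : R) ∈ Module.annihilator R N := h ▸ Submodule.mem_top
    exact hn (by simpa using Module.mem_annihilator.mp this n)
  obtain ⟨m, hm, hml⟩ := Ideal.exists_le_maximal _ hann
  haveI := hm
  refine ⟨m, hm, ?_⟩
  -- N ⧸ mN is nontrivial (Nakayama)
  have hneq : (m • ⊤ : Submodule R N) ≠ ⊤ := by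
    intro htop
    obtain ⟨r, hr1, hr0⟩ :=
      Submodule.exists_sub_one_mem_and_smul_eq_zero_of_fg_of_le_smul m ⊤
        (IsNoetherian.noetherian _) (le_of_eq htop.symm)
    have hrm : r ∈ m := hml (Module.mem_annihilator.mpr fun n => hr0 n Submodule.mem_top)
    have h1 : (1 : R) ∈ m := by simpa using m.sub_mem hrm hr1
    exact hm.ne_top ((Ideal.eq_top_iff_one m).mpr h1)
  haveI : Nontrivial (↥N ⧸ (m • ⊤ : Submodule R ↥N)) :=
    Submodule.Quotient.nontrivial_iff.mpr hneq
  haveI hknt : Nontrivial ((R ⧸ m) ⊗[R] ↥N) :=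
    (TensorProduct.quotTensorEquivQuotSMul (↥N) m).toEquiv.nontrivial
  -- the fraction field kills N
  haveI hKN : Subsingleton ((FractionRing R) ⊗[R] ↥N) := by
    rw [subsingleton_iff_forall_eq 0]
    intro z
    induction z using TensorProduct.induction_on with
    | zero => rfl
    | add x y hx hy => rw [hx, hy, add_zero]
    | tmul x n =>
      obtain ⟨⟨a, ha⟩, han⟩ := n.2
      have ha0 : algebraMap R (FractionRing R) a ≠ 0 := by
        simpa using (IsFractionRing.to_map_eq_zero_iff (K := FractionRing R)).not.mpr
          (nonZeroDivisors.ne_zero ha)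
      have : x = a • ((algebraMap R (FractionRing R) a)⁻¹ * x) := by
        rw [Algebra.smul_def, ← mul_assoc, mul_inv_cancel₀ ha0, one_mul]
      rw [this, smul_tmul]
      have : a • n = 0 := Subtype.ext (by simpa using han)
      rw [this, tmul_zero]
  -- base-changed splittings
  have eK : (FractionRing R) ⊗[R] M ≃ₗ[FractionRing R]
      ((FractionRing R) ⊗[R] ↥N) × ((FractionRing R) ⊗[R] (M ⧸ N)) :=
    (LinearEquiv.baseChange R (FractionRing R) _ _ e.symm).trans
      (prodRightAlg R (FractionRing R) ↥N (M ⧸ N))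
  have ek : (R ⧸ m) ⊗[R] M ≃ₗ[R ⧸ m]
      ((R ⧸ m) ⊗[R] ↥N) × ((R ⧸ m) ⊗[R] (M ⧸ N)) :=
    (LinearEquiv.baseChange R (R ⧸ m) _ _ e.symm).trans
      (prodRightAlg R (R ⧸ m) ↥N (M ⧸ N))
  have h1 : Module.finrank (FractionRing R) ((FractionRing R) ⊗[R] ↥N) = 0 :=
    Module.finrank_zero_of_subsingleton
  have h2 : Module.finrank (FractionRing R) ((FractionRing R) ⊗[R] (M ⧸ N))
      = Module.finrank R (M ⧸ N) := Module.finrank_baseChange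
  have h3 : Module.finrank (R ⧸ m) ((R ⧸ m) ⊗[R] (M ⧸ N))
      = Module.finrank R (M ⧸ N) := Module.finrank_baseChange
  have h4 : 0 < Module.finrank (R ⧸ m) ((R ⧸ m) ⊗[R] ↥N) := by
    letI : Field (R ⧸ m) := Ideal.Quotient.field m
    exact Module.finrank_pos
  have h5 : Module.finrank (R ⧸ m) (((R ⧸ m) ⊗[R] ↥N) × ((R ⧸ m) ⊗[R] (M ⧸ N)))
      = Module.finrank (R ⧸ m) ((R ⧸ m) ⊗[R] ↥N)
        + Module.finrank (R ⧸ m) ((R ⧸ m) ⊗[R] (M ⧸ N)) := by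
    letI : Field (R ⧸ m) := Ideal.Quotient.field m
    exact Module.finrank_prod
  have h6 : Module.finrank (FractionRing R)
      (((FractionRing R) ⊗[R] ↥N) × ((FractionRing R) ⊗[R] (M ⧸ N)))
      = Module.finrank (FractionRing R) ((FractionRing R) ⊗[R] ↥N)
        + Module.finrank (FractionRing R) ((FractionRing R) ⊗[R] (M ⧸ N)) :=
    Module.finrank_prod
  rw [eK.finrank_eq, ek.finrank_eq, h5, h6, h1, h2, h3]
  omega
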